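/- Let Y be a real topological vector space and let f : Y → EReal be continuous and positively homogeneous, i.e. epi f is a nonempty cone (closed under multiplication by nonnegative scalars). Then either f attains only real values on Y, or f(y) = −∞ for all y ∈ Y. -/

import Mathlib

theorem continuous_posHomogeneous_finite_or_bot {Y : Type*} [AddCommGroup Y] [Module ℝ Y]
    [TopologicalSpace Y] [IsTopologicalAddGroup Y] [ContinuousSMul ℝ Y]
    (f : Y → EReal) (hf : Continuous f)
    (hne : {p : Y × ℝ | f p.1 ≤ (p.2 : EReal)}.Nonempty)
    (hcone : ∀ p ∈ {p : Y × ℝ | f p.1 ≤ (p.2 : EReal)}, ∀ l : ℝ, 0 ≤ l →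
      l • p ∈ {p : Y × ℝ | f p.1 ≤ (p.2 : EReal)}) :
    (∀ y : Y, ∃ c : ℝ, f y = (c : EReal)) ∨ (∀ y : Y, f y = ⊥) := by
  have h0 : f 0 ≤ (0 : EReal) := by
    obtain ⟨p, hp⟩ := hne
    have := hcone p hp 0 le_rfl
    simpa using this
  have hgc : ∀ y : Y, Continuous fun t : ℝ ↦ f (t • y) := fun y =>
    hf.comp (continuous_id.smul continuous_const)
  have key : ∀ y : Y, ∀ c : ℝ, f 0 < (c : EReal) →
      ∃ t : ℝ, 0 < t ∧ t ≤ 1 ∧ f (t • y) ≤ (c : EReal) := by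
    intro y c hc
    have hU : IsOpen ((fun t : ℝ ↦ f (t • y)) ⁻¹' Set.Iio (c : EReal)) :=
      isOpen_Iio.preimage (hgc y)
    have h0mem : (0 : ℝ) ∈ (fun t : ℝ ↦ f (t • y)) ⁻¹' Set.Iio (c : EReal) := by
      simpa using hc
    obtain ⟨ε, hε, hball⟩ := Metric.isOpen_iff.1 hU 0 h0mem
    refine ⟨min (ε / 2) 1, by positivity, min_le_right _ _, le_of_lt ?_⟩
    have : min (ε / 2) 1 ∈ Metric.ball (0 : ℝ) ε := by
      simp only [Metric.mem_ball, Real.dist_eq, sub_zero]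
      rw [abs_of_pos (by positivity)]
      exact lt_of_le_of_lt (min_le_left _ _) (by linarith)
    exact hball this
  have scale : ∀ y : Y, ∀ t : ℝ, 0 < t → ∀ c : ℝ, f (t • y) ≤ (c : EReal) →
      f y ≤ ((t⁻¹ * c : ℝ) : EReal) := by
    intro y t ht c hc
    have := hcone (t • y, c) hc t⁻¹ (by positivity)
    simpa [smul_smul, inv_mul_cancel₀ ht.ne'] using this
  by_cases hb : f 0 = ⊥
  · right
    intro y
    rw [EReal.eq_bot_iff_forall_lt]
    intro r
    set c : ℝ := min (r - 1) (-1) with hcdef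
    have hc0 : c ≤ -1 := min_le_right _ _
    have hcr : c ≤ r - 1 := min_le_left _ _
    obtain ⟨t, ht, ht1, hle⟩ := key y c (by rw [hb]; exact bot_lt_iff_ne_bot.2 (EReal.coe_ne_bot c))
    have h1 : f y ≤ ((t⁻¹ * c : ℝ) : EReal) := scale y t ht c hle
    have h2 : t⁻¹ * c ≤ c := by
      have ht' : (1 : ℝ) ≤ t⁻¹ := by
        have := inv_anti₀ ht ht1
        simpa using this
      nlinarith
    calc f y ≤ ((t⁻¹ * c : ℝ) : EReal) := h1
      _ ≤ (c : EReal) := by exact_mod_cast h2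
      _ < (r : EReal) := by exact_mod_cast by linarith
  · left
    intro y
    have hnt : f y ≠ ⊤ := by
      obtain ⟨t, ht, _, hle⟩ := key y 1 (lt_of_le_of_lt h0 (by norm_num))
      exact ne_top_of_le_ne_top (EReal.coe_ne_top _) (scale y t ht 1 hle)
    have hnb : f y ≠ ⊥ := by
      intro hyb
      have hs : ∀ s : ℝ, 0 < s → f (s • y) = ⊥ := by
        intro s hs
        rw [EReal.eq_bot_iff_forall_lt]
        intro r
        have hmem : (y, s⁻¹ * (r - 1)) ∈ {p : Y × ℝ | f p.1 ≤ (p.2 : EReal)} := by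
          simp only [Set.mem_setOf_eq]
          rw [hyb]; exact bot_le
        have := hcone _ hmem s hs.le
        simp only [Set.mem_setOf_eq, Prod.smul_fst, Prod.smul_snd, smul_eq_mul] at this
        rw [← mul_assoc, mul_inv_cancel₀ hs.ne', one_mul] at this
        exact lt_of_le_of_lt this (by exact_mod_cast by linarith)
      have ht : Filter.Tendsto (fun t : ℝ ↦ f (t • y)) (nhdsWithin 0 (Set.Ioi 0))
          (nhds (f ((0 : ℝ) • y))) :=
        ((hgc y).tendsto 0).mono_left nhdsWithin_le_nhds
      have heq : (fun t : ℝ ↦ f (t • y)) =ᶠ[nhdsWithin 0 (Set.Ioi 0)] fun _ ↦ (⊥ : EReal) :=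
        eventually_nhdsWithin_of_forall fun s hsm => hs s hsm
      have : f ((0 : ℝ) • y) = ⊥ := tendsto_nhds_unique (ht.congr' heq) tendsto_const_nhds
      exact hb (by simpa using this)
    exact ⟨(f y).toReal, (EReal.coe_toReal hnt hnb).symm⟩
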